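/- Let λ ∈ (0,1) and suppose (A_m⁺)_{m≥0}, (B_m⁻)_{m≥0} are real sequences with |A_m⁺| + |B_m⁻| ≤ C λ^{2m} satisfying the system B_n⁻ = (2λ^{2n}/π) Σ_{m≥0} A_m⁺/(n+m+1/2) and A_n⁺ = (λ^{2n+1}/(2π)) Σ_{m≥0} B_m⁻/(n+m+1/2) + λ^{2n+1} ω(2n+1) with ω(s) = −2δ*/(π s) and δ* = 0. Then A_n⁺ = 0 and B_n⁻ = 0 for all n (the homogeneous system has only the trivial solution in this class). -/

import Mathlib

open Real

noncomputable def wseq : ℕ → ℝ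
  | 0 => 1
  | n+1 => wseq n * (2*n+1) / (2*n+2)

lemma wseq_pos : ∀ n, 0 < wseq n := by
  intro n
  induction n with
  | zero => norm_num [wseq]
  | succ k ih => rw [wseq]; positivity

lemma wseq_succ (n : ℕ) : wseq (n+1) = wseq n * (2*n+1) / (2*n+2) := rfl

lemma wseq_mul : ∀ n : ℕ, wseq (n+1) * (2*(n:ℝ)+2) = wseq n * (2*n+1) := by
  intro n
  rw [wseq_succ]
  have h : (2*(n:ℝ)+2) ≠ 0 := by positivity
  field_simp

lemma wseq_le_one : ∀ n, wseq n ≤ 1 := by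
  intro n
  induction n with
  | zero => norm_num [wseq]
  | succ k ih =>
    rw [wseq_succ]
    have h1 : (0:ℝ) < 2*k+2 := by positivity
    rw [div_le_one h1]
    nlinarith [wseq_pos k]

lemma wseq_ge (n : ℕ) : 1/(2*(n:ℝ)+1) ≤ wseq n := by
  induction n with
  | zero => norm_num [wseq]
  | succ k ih =>
    rw [wseq_succ]
    have h2 : (0:ℝ) < 2*(k:ℝ)+1 := by positivity
    have h3 : (0:ℝ) < 2*((k:ℕ):ℝ)+2 := by positivity
    have h4 : (0:ℝ) < 2*((k:ℕ)+1:ℝ)+1 := by positivity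
    have hw := wseq_pos k
    push_cast
    rw [div_le_div_iff₀ h4 h3]
    rw [div_le_iff₀ h2] at ih
    nlinarith

-- partial sum identity for P
lemma sumP (N : ℕ) : ∑ k ∈ Finset.range N, wseq k / (k+1) = 2 * (1 - wseq N) := by
  induction N with
  | zero => simp [wseq]
  | succ M ih =>
    rw [Finset.sum_range_succ, ih, wseq_succ]
    have h1 : ((M:ℝ)+1) ≠ 0 := by positivity
    have h2 : (2*(M:ℝ)+2) ≠ 0 := by positivity
    field_simp
    ring


lemma poly_id (N : ℕ) (t : ℝ) :
    2*(1-t) * (∑ m ∈ Finset.range (N+1), wseq m * (m * t^(m-1)))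
      - ∑ m ∈ Finset.range (N+1), wseq m * t^m
    = -((2*(N:ℝ)+1) * wseq N * t^N) := by
  induction N with
  | zero => simp [wseq]
  | succ M ih =>
    rw [Finset.sum_range_succ, Finset.sum_range_succ (f := fun m => wseq m * t^m)]
    have hw := wseq_mul M
    push_cast [Nat.add_sub_cancel] at ih hw ⊢
    linear_combination ih + t^M * hw

lemma partial_le_inv_sqrt (N : ℕ) {t : ℝ} (ht0 : 0 ≤ t) (ht1 : t < 1) :
    (∑ m ∈ Finset.range N, wseq m * t^m) * Real.sqrt (1-t) ≤ 1 := by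
  rcases N with _ | M
  · simp
  rcases eq_or_lt_of_le ht0 with h0 | h0
  · rw [← h0]
    rw [Finset.sum_range_succ']
    norm_num [wseq]
  -- 0 < t < 1
  set S : ℝ → ℝ := fun s => ∑ m ∈ Finset.range (M+1), wseq m * s^m with hSdef
  set S' : ℝ → ℝ := fun s => ∑ m ∈ Finset.range (M+1), wseq m * (m * s^(m-1)) with hS'def
  set F : ℝ → ℝ := fun s => S s * Real.sqrt (1-s) with hFdef
  have hderiv : ∀ x ∈ Set.Ioo (0:ℝ) t, HasDerivAt F
      (S' x * Real.sqrt (1-x) + S x * (1/(2*Real.sqrt (1-x)) * (-1))) x := by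
    intro x hx
    have hx1 : x < 1 := lt_trans hx.2 ht1
    have h1x : (1:ℝ) - x ≠ 0 := by linarith
    have hS : HasDerivAt S (S' x) x := by
      apply HasDerivAt.fun_sum
      intro m _
      simpa using (hasDerivAt_pow m x).const_mul (wseq m)
    have hg : HasDerivAt (fun s : ℝ => Real.sqrt (1-s)) (1/(2*Real.sqrt (1-x)) * (-1)) x := by
      exact (Real.hasDerivAt_sqrt h1x).comp x ((hasDerivAt_id x).const_sub 1)
    exact hS.mul hg
  have hcont : ContinuousOn F (Set.Icc 0 t) := by
    apply ContinuousOn.mul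
    · exact (continuous_finset_sum _ (fun m _ => (continuous_pow m).const_smul (wseq m))).continuousOn
    · exact (Real.continuous_sqrt.comp (continuous_const.sub continuous_id)).continuousOn
  have hanti : AntitoneOn F (Set.Icc 0 t) := by
    apply antitoneOn_of_hasDerivWithinAt_nonpos (convex_Icc 0 t) hcont
    · intro x hx
      rw [interior_Icc] at hx
      exact (hderiv x hx).hasDerivWithinAt
    · intro x hx
      rw [interior_Icc] at hx
      have hx1 : x < 1 := lt_trans hx.2 ht1
      have h1x : (0:ℝ) < 1 - x := by linarith
      have hsq : (0:ℝ) < Real.sqrt (1-x) := Real.sqrt_pos.mpr h1x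
      have hsq2 : Real.sqrt (1-x) * Real.sqrt (1-x) = 1 - x := Real.mul_self_sqrt (le_of_lt h1x)
      have hid := poly_id M x
      have hterm : (0:ℝ) ≤ (2*(M:ℝ)+1) * wseq M * x^M :=
        mul_nonneg (mul_nonneg (by positivity) (wseq_pos M).le) (pow_nonneg hx.1.le M)
      have hkey : 2*(1-x)*(S' x) - S x = -((2*(M:ℝ)+1) * wseq M * x^M) := hid
      have hrw : S x * (1/(2*Real.sqrt (1-x)) * (-1)) = -(S x/(2*Real.sqrt (1-x))) := by
        ring
      rw [hrw, ← sub_eq_add_neg, sub_nonpos, le_div_iff₀ (by positivity)]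
      have h2 : S' x * Real.sqrt (1-x) * (2*Real.sqrt (1-x)) = 2*(1-x)*(S' x) := by
        linear_combination (2*S' x) * hsq2
      rw [h2]
      linarith
  have h1 : F t ≤ F 0 := hanti (Set.mem_Icc.mpr ⟨le_refl 0, ht0⟩) (Set.mem_Icc.mpr ⟨ht0, le_refl t⟩) ht0
  have hF0 : F 0 = 1 := by
    simp only [hFdef, hSdef]
    rw [show (1:ℝ) - 0 = 1 by ring, Real.sqrt_one]
    simp [Finset.sum_range_succ', wseq]
  rw [hF0] at h1
  exact h1

lemma partial_arcsin (N : ℕ) {b : ℝ} (hb0 : 0 ≤ b) (hb1 : b < 1) :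
    ∑ m ∈ Finset.range N, wseq m / (2*m+1) * b^(2*m+1) ≤ Real.arcsin b := by
  set p : ℝ → ℝ := fun s => ∑ m ∈ Finset.range N, wseq m / (2*m+1) * s^(2*m+1) with hpdef
  set φ : ℝ → ℝ := fun s => Real.arcsin s - p s with hφdef
  have hmono : MonotoneOn φ (Set.Icc 0 b) := by
    apply monotoneOn_of_hasDerivWithinAt_nonneg (f' := fun x =>
        1 / Real.sqrt (1 - x^2) - ∑ m ∈ Finset.range N, wseq m * (x^2)^m)
      (convex_Icc 0 b)
    · apply ContinuousOn.sub
      · exact Real.continuous_arcsin.continuousOn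
      · exact (continuous_finset_sum _ (fun m _ =>
          (continuous_pow (2*m+1)).const_smul (wseq m / (2*m+1)))).continuousOn
    · intro x hx
      rw [interior_Icc] at hx
      have hx1 : x < 1 := lt_of_lt_of_le hx.2 (le_of_lt hb1)
      have harc : HasDerivAt Real.arcsin (1 / Real.sqrt (1 - x^2)) x :=
        Real.hasDerivAt_arcsin (by linarith [hx.1]) (ne_of_lt hx1)
      have hp : HasDerivAt p (∑ m ∈ Finset.range N, wseq m * (x^2)^m) x := by
        have h1 : HasDerivAt p (∑ m ∈ Finset.range N,
            wseq m / (2*m+1) * ((2*m+1) * x^(2*m))) x := by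
          apply HasDerivAt.fun_sum
          intro m _
          simpa using (hasDerivAt_pow (2*m+1) x).const_mul (wseq m / (2*m+1))
        convert h1 using 1
        apply Finset.sum_congr rfl
        intro m _
        have h2 : ((2*m+1 : ℕ) : ℝ) ≠ 0 := by positivity
        rw [← pow_mul]
        field_simp
      exact ((harc.sub hp).hasDerivWithinAt)
    · intro x hx
      rw [interior_Icc] at hx
      have hx1 : x < 1 := lt_of_lt_of_le hx.2 (le_of_lt hb1)
      have ht0 : (0:ℝ) ≤ x^2 := sq_nonneg x
      have ht1 : x^2 < 1 := by nlinarith [hx.1]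
      have hkey := partial_le_inv_sqrt N ht0 ht1
      have h1x2 : (0:ℝ) < 1 - x^2 := by nlinarith
      have hsq : (0:ℝ) < Real.sqrt (1 - x^2) := Real.sqrt_pos.mpr h1x2
      rw [sub_nonneg, le_div_iff₀ hsq]
      exact hkey
  have h0 : φ 0 ≤ φ b := hmono (Set.mem_Icc.mpr ⟨le_refl 0, hb0⟩)
    (Set.mem_Icc.mpr ⟨hb0, le_refl b⟩) hb0
  have hφ0 : φ 0 = 0 := by
    simp [hφdef, hpdef, Real.arcsin_zero, zero_pow]
  rw [hφ0] at h0
  simpa [hφdef] using h0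

lemma partial_half_le (N : ℕ) : ∑ m ∈ Finset.range N, wseq m / (2*(m:ℝ)+1) ≤ π/2 := by
  set p : ℝ → ℝ := fun s => ∑ m ∈ Finset.range N, wseq m / (2*m+1) * s^(2*m+1) with hpdef
  have hcont : Continuous p :=
    continuous_finset_sum _ (fun m _ => (continuous_pow (2*m+1)).const_smul (wseq m / (2*m+1)))
  have hp1 : p 1 = ∑ m ∈ Finset.range N, wseq m / (2*(m:ℝ)+1) := by
    simp [hpdef]
  have htend : Filter.Tendsto p (nhdsWithin 1 (Set.Iio 1)) (nhds (p 1)) :=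
    (hcont.tendsto 1).mono_left nhdsWithin_le_nhds
  have hev : ∀ᶠ b in nhdsWithin (1:ℝ) (Set.Iio 1), p b ≤ π/2 := by
    have h1 : ∀ᶠ b in nhdsWithin (1:ℝ) (Set.Iio 1), b ∈ Set.Ioo (0:ℝ) 1 := by
      have h2 : Set.Ioi (0:ℝ) ∈ nhdsWithin (1:ℝ) (Set.Iio 1) :=
        nhdsWithin_le_nhds (isOpen_Ioi.mem_nhds (by norm_num))
      have h3 : Set.Iio (1:ℝ) ∈ nhdsWithin (1:ℝ) (Set.Iio 1) := self_mem_nhdsWithin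
      filter_upwards [h2, h3] with b hb2 hb3
      exact ⟨hb2, hb3⟩
    filter_upwards [h1] with b hb
    calc p b ≤ Real.arcsin b := partial_arcsin N hb.1.le hb.2
    _ ≤ π/2 := Real.arcsin_le_pi_div_two b
  have := le_of_tendsto htend hev
  rwa [hp1] at this

lemma sum_half_le (N : ℕ) : ∑ m ∈ Finset.range N, wseq m / ((m:ℝ)+1/2) ≤ π := by
  have h1 : ∀ m : ℕ, wseq m / ((m:ℝ)+1/2) = 2 * (wseq m / (2*(m:ℝ)+1)) := by
    intro m
    have : ((m:ℝ)+1/2) ≠ 0 := by positivity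
    have : (2*(m:ℝ)+1) ≠ 0 := by positivity
    field_simp
  simp_rw [h1, ← Finset.mul_sum]
  linarith [partial_half_le N]

lemma summable_half : Summable (fun m : ℕ => wseq m / ((m:ℝ)+1/2)) :=
  summable_of_sum_range_le (fun m => div_nonneg (wseq_pos m).le (by positivity)) sum_half_le

lemma tsum_half_le : ∑' m : ℕ, wseq m / ((m:ℝ)+1/2) ≤ π :=
  Real.tsum_le_of_sum_range_le (fun m => div_nonneg (wseq_pos m).le (by positivity)) sum_half_le

lemma summable_P : Summable (fun k : ℕ => wseq k / ((k:ℝ)+1)) := by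
  apply summable_of_sum_range_le (c := 2) (fun k => div_nonneg (wseq_pos k).le (by positivity))
  intro N
  rw [sumP]
  nlinarith [wseq_pos N]

lemma tsum_P_le : ∑' k : ℕ, wseq k / ((k:ℝ)+1) ≤ 2 := by
  apply Real.tsum_le_of_sum_range_le (fun k => div_nonneg (wseq_pos k).le (by positivity))
  intro N
  rw [sumP]
  nlinarith [wseq_pos N]

lemma summable_G (n : ℕ) : Summable (fun m : ℕ => wseq m / ((n:ℝ)+m+1/2)) := by
  apply Summable.of_nonneg_of_le (fun m => div_nonneg (wseq_pos m).le (by positivity))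
    (fun m => ?_) summable_half
  apply div_le_div_of_nonneg_left (wseq_pos m).le (by positivity)
  have : (0:ℝ) ≤ (n:ℝ) := Nat.cast_nonneg n
  linarith

lemma key_ineq : ∀ n : ℕ, (∑' m : ℕ, wseq m / ((n:ℝ)+m+1/2)) ≤ π * wseq n := by
  intro n
  induction n with
  | zero =>
    have hc : ∀ m : ℕ, wseq m/((↑(0:ℕ):ℝ)+m+1/2) = wseq m/((m:ℝ)+1/2) := by
      intro m; norm_num
    rw [tsum_congr hc]
    simpa [wseq] using tsum_half_le
  | succ n ih =>
    have hc : (0:ℝ) < 2*(n:ℝ)+1 := by positivity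
    have hc2 : (0:ℝ) < 2*(n:ℝ)+2 := by positivity
    set P := ∑' k : ℕ, wseq k / ((k:ℝ)+1) with hPdef
    set Gn := ∑' m : ℕ, wseq m / ((n:ℝ)+m+1/2) with hGndef
    have hcast : ∀ m : ℕ, wseq m / ((↑(n+1):ℝ)+m+1/2) = wseq m / ((n:ℝ)+1+m+1/2) := by
      intro m; push_cast; ring_nf
    rw [tsum_congr hcast]
    set G1 := ∑' m : ℕ, wseq m / ((n:ℝ)+1+m+1/2) with hG1def
    have hsum1 : Summable (fun m : ℕ => wseq m / ((n:ℝ)+1+m+1/2)) := by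
      have h := summable_G (n+1)
      apply h.congr
      intro m
      rw [hcast]
    have hshift := Summable.tsum_eq_zero_add (f := fun m : ℕ => wseq m / ((n:ℝ)+m+1/2)) (summable_G n)
    have hfk : ∀ k : ℕ, wseq (k+1) / ((n:ℝ)+(↑(k+1):ℝ)+1/2)
        = (-(1/(2*(n:ℝ)+1))) * (wseq k/((k:ℝ)+1))
          + ((2*(n:ℝ)+2)/(2*(n:ℝ)+1)) * (wseq k/((n:ℝ)+1+(k:ℝ)+1/2)) := by
      intro k
      have hw : wseq (k+1) = wseq k * (2*(k:ℝ)+1)/(2*(k:ℝ)+2) := wseq_succ k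
      rw [hw]
      have d1 : ((k:ℝ)+1) ≠ 0 := by positivity
      have d2 : (2*(k:ℝ)+2) ≠ 0 := by positivity
      have d3 : ((n:ℝ)+((k:ℝ)+1)+1/2) ≠ 0 := by positivity
      have d4 : ((n:ℝ)+1+(k:ℝ)+1/2) ≠ 0 := by positivity
      have d5 : (2*(n:ℝ)+1) ≠ 0 := ne_of_gt hc
      push_cast
      field_simp
      ring
    have htail : (∑' k : ℕ, wseq (k+1) / ((n:ℝ)+(↑(k+1):ℝ)+1/2))
        = (-(1/(2*(n:ℝ)+1))) * P + ((2*(n:ℝ)+2)/(2*(n:ℝ)+1)) * G1 := by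
      rw [tsum_congr hfk]
      rw [Summable.tsum_add (summable_P.mul_left _) (hsum1.mul_left _)]
      rw [tsum_mul_left, tsum_mul_left]
    have hf0 : wseq 0 / ((n:ℝ)+(↑(0:ℕ):ℝ)+1/2) = 1/((n:ℝ)+1/2) := by
      norm_num [wseq]
    have heq : Gn = 1/((n:ℝ)+1/2)
        + ((-(1/(2*(n:ℝ)+1))) * P + ((2*(n:ℝ)+2)/(2*(n:ℝ)+1)) * G1) := by
      rw [hGndef, hshift, ← htail, ← hf0]
      try norm_num
    have d6 : ((n:ℝ)+1/2) ≠ 0 := by positivity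
    have d5 : (2*(n:ℝ)+1) ≠ 0 := ne_of_gt hc
    have e2 : (2*(n:ℝ)+1) * (1/((n:ℝ)+1/2)) = 2 := by field_simp
    have e3 : (2*(n:ℝ)+1) * (1/(2*(n:ℝ)+1)) = 1 := by field_simp
    have hlin : (2*(n:ℝ)+2) * G1 = (2*(n:ℝ)+1) * Gn - 2 + P := by
      linear_combination (-(2*(n:ℝ)+1)) * heq + (P - (2*(n:ℝ)+2)*G1) * e3 - e2
    have hPle : P ≤ 2 := tsum_P_le
    have hwkey := wseq_mul n
    have h2 : (2*(n:ℝ)+2) * G1 ≤ (2*(n:ℝ)+2) * (π * wseq (n+1)) := by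
      rw [hlin]
      have hrw : (2*(n:ℝ)+2) * (π * wseq (n+1)) = π * (wseq n * (2*(n:ℝ)+1)) := by
        rw [← hwkey]; ring
      rw [hrw]
      nlinarith [ih, hPle, hc]
    exact le_of_mul_le_mul_left (by linarith [h2]) hc2

lemma pow_mul_le_aux {lam : ℝ} (h0 : 0 < lam) (h1 : lam < 1) (n : ℕ) :
    ((n:ℝ)+1) * lam^n * (1-lam) ≤ 1 := by
  have h2 : ∀ i ∈ Finset.range (n+1), lam^n ≤ lam^i := by
    intro i hi
    exact pow_le_pow_of_le_one h0.le h1.le (Nat.lt_succ_iff.mp (Finset.mem_range.mp hi))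
  have h3 : ((n:ℝ)+1) * lam^n ≤ ∑ i ∈ Finset.range (n+1), lam^i := by
    calc ((n:ℝ)+1) * lam^n = ∑ _i ∈ Finset.range (n+1), lam^n := by
          rw [Finset.sum_const, Finset.card_range]; push_cast; ring
    _ ≤ _ := Finset.sum_le_sum h2
  have h4 := geom_sum_mul lam (n+1)
  have h5 : (0:ℝ) ≤ 1 - lam := by linarith
  have h6 := mul_le_mul_of_nonneg_right h3 h5
  have h7 : (0:ℝ) ≤ lam^(n+1) := pow_nonneg h0.le (n+1)
  nlinarith [h6, h4, h7]

theorem homogeneous_system_trivial (lam C : ℝ) (hlam0 : 0 < lam) (hlam1 : lam < 1) (hC : 0 < C)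
    (A B : ℕ → ℝ)
    (hbound : ∀ m : ℕ, |A m| + |B m| ≤ C * lam ^ (2 * m))
    (hB : ∀ n : ℕ, B n = (2 * lam ^ (2 * n) / π) * ∑' m : ℕ, A m / (n + m + 1 / 2))
    (hA : ∀ n : ℕ, A n = (lam ^ (2 * n + 1) / (2 * π)) * ∑' m : ℕ, B m / (n + m + 1 / 2)) :
    ∀ n : ℕ, A n = 0 ∧ B n = 0 := by
  have hpi := Real.pi_pos
  have hbA : ∀ m, |A m| ≤ C * lam^(2*m) := by
    intro m; have := hbound m; have := abs_nonneg (B m); linarith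
  set g : ℕ → ℝ := fun n => |A n| / (lam^n * wseq n) with hgdef
  have hgden : ∀ n : ℕ, (0:ℝ) < lam^n * wseq n :=
    fun n => mul_pos (pow_pos hlam0 n) (wseq_pos n)
  have hgbdd : BddAbove (Set.range g) := by
    refine ⟨2*C/(1-lam), ?_⟩
    rintro x ⟨n, rfl⟩
    show |A n| / (lam^n * wseq n) ≤ 2*C/(1-lam)
    rw [div_le_div_iff₀ (hgden n) (by linarith)]
    have h5 := pow_mul_le_aux hlam0 hlam1 n
    have h6 := wseq_ge n
    have hln := pow_pos hlam0 n
    have h7 : lam^(2*n) = lam^n * lam^n := by rw [two_mul, pow_add]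
    have h8 : |A n| ≤ C * (lam^n * lam^n) := by rw [← h7]; exact hbA n
    -- need : |A n| * (1-lam) ≤ 2*C*(lam^n * wseq n)
    have haK : lam^n * (1-lam) ≤ 1/((n:ℝ)+1) := by
      rw [le_div_iff₀ (by positivity)]
      nlinarith [h5]
    have h9 : (1:ℝ)/((n:ℝ)+1) ≤ 2 * wseq n := by
      have h10 : (1:ℝ)/(2*(n:ℝ)+1) ≤ wseq n := h6
      rw [div_le_iff₀ (by positivity)]
      rw [div_le_iff₀ (by positivity)] at h10
      nlinarith [h10]
    have h11 : lam^n * (1-lam) ≤ 2 * wseq n := le_trans haK h9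
    nlinarith [mul_le_mul_of_nonneg_left h11 (mul_nonneg hC.le hln.le),
      mul_le_mul_of_nonneg_right h8 (by linarith : (0:ℝ) ≤ 1-lam), hln, hC.le]
  set S := ⨆ n, g n with hSdef
  have hgS : ∀ n, g n ≤ S := fun n => le_ciSup hgbdd n
  have hS0 : 0 ≤ S := le_trans (div_nonneg (abs_nonneg _) (hgden 0).le) (hgS 0)
  have hlam_le1 : ∀ m : ℕ, lam^m ≤ 1 := fun m => pow_le_one₀ hlam0.le hlam1.le
  have hAle : ∀ m, |A m| ≤ S * wseq m := by
    intro m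
    have h1 := hgS m
    rw [hgdef] at h1
    simp only [] at h1
    rw [div_le_iff₀ (hgden m)] at h1
    calc |A m| ≤ S * (lam^m * wseq m) := h1
    _ ≤ S * wseq m :=
        mul_le_mul_of_nonneg_left (mul_le_of_le_one_left (wseq_pos m).le (hlam_le1 m)) hS0
  have hdenom : ∀ (n m : ℕ), (0:ℝ) < (n:ℝ) + m + 1/2 := by intro n m; positivity
  -- generic bound machinery
  have habs : ∀ (f : ℕ → ℝ) (c : ℝ), 0 ≤ c → (∀ m, |f m| ≤ c * wseq m) →
      ∀ n : ℕ, |∑' m : ℕ, f m / ((n:ℝ)+m+1/2)| ≤ π * (c * wseq n) := by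
    intro f c hc hf n
    have hsumf : Summable (fun m => |f m / ((n:ℝ)+m+1/2)|) := by
      apply Summable.of_nonneg_of_le (fun m => abs_nonneg _) (fun m => ?_)
        ((summable_G n).mul_left c)
      rw [abs_div, abs_of_pos (hdenom n m), ← mul_div_assoc]
      gcongr
      exact hf m
    have hstep1 : |∑' m : ℕ, f m / ((n:ℝ)+m+1/2)| ≤ ∑' m : ℕ, |f m / ((n:ℝ)+m+1/2)| := by
      have h := norm_tsum_le_tsum_norm (f := fun m : ℕ => f m / ((n:ℝ)+m+1/2))
        (by simpa only [Real.norm_eq_abs] using hsumf)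
      simpa only [Real.norm_eq_abs] using h
    have hstep2 : ∑' m : ℕ, |f m / ((n:ℝ)+m+1/2)| ≤ ∑' m : ℕ, c * (wseq m / ((n:ℝ)+m+1/2)) := by
      apply Summable.tsum_le_tsum _ hsumf ((summable_G n).mul_left c)
      intro m
      rw [abs_div, abs_of_pos (hdenom n m), ← mul_div_assoc]
      gcongr
      exact hf m
    have hstep3 : ∑' m : ℕ, c * (wseq m / ((n:ℝ)+m+1/2)) = c * ∑' m : ℕ, wseq m / ((n:ℝ)+m+1/2) :=
      tsum_mul_left
    calc |∑' m : ℕ, f m / ((n:ℝ)+m+1/2)| ≤ c * ∑' m : ℕ, wseq m / ((n:ℝ)+m+1/2) := by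
          rw [← hstep3]; exact le_trans hstep1 hstep2
    _ ≤ c * (π * wseq n) := mul_le_mul_of_nonneg_left (key_ineq n) hc
    _ = π * (c * wseq n) := by ring
  have hTA := habs A S hS0 hAle
  have hBle : ∀ m, |B m| ≤ (2*S) * wseq m := by
    intro m
    rw [hB m, abs_mul]
    have hco : |2 * lam^(2*m)/π| = 2*lam^(2*m)/π := abs_of_pos (by positivity)
    rw [hco]
    calc 2*lam^(2*m)/π * |∑' k : ℕ, A k / ((m:ℝ)+k+1/2)|
        ≤ 2*lam^(2*m)/π * (π * (S * wseq m)) :=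
          mul_le_mul_of_nonneg_left (hTA m) (by positivity)
    _ = 2*lam^(2*m) * (S * wseq m) := by field_simp; try ring
    _ ≤ (2*S) * wseq m := by
        nlinarith [hlam_le1 (2*m), pow_pos hlam0 (2*m), mul_nonneg hS0 (wseq_pos m).le]
  have hTB := habs B (2*S) (by linarith) hBle
  have hA2 : ∀ n, |A n| ≤ lam^(2*n+1) * (S * wseq n) := by
    intro n
    rw [hA n, abs_mul]
    have hco : |lam^(2*n+1)/(2*π)| = lam^(2*n+1)/(2*π) := abs_of_pos (by positivity)
    rw [hco]
    calc lam^(2*n+1)/(2*π) * |∑' k : ℕ, B k / ((n:ℝ)+k+1/2)|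
        ≤ lam^(2*n+1)/(2*π) * (π * ((2*S) * wseq n)) :=
          mul_le_mul_of_nonneg_left (hTB n) (by positivity)
    _ = lam^(2*n+1) * (S * wseq n) := by field_simp
  have hcontr : ∀ n, g n ≤ lam * S := by
    intro n
    show |A n| / (lam^n * wseq n) ≤ lam * S
    rw [div_le_iff₀ (hgden n)]
    have h1 : lam^(2*n+1) ≤ lam^(n+1) := pow_le_pow_of_le_one hlam0.le hlam1.le (by omega)
    have h2 : lam^(n+1) = lam * lam^n := by ring
    calc |A n| ≤ lam^(2*n+1) * (S * wseq n) := hA2 n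
    _ ≤ lam^(n+1) * (S * wseq n) :=
        mul_le_mul_of_nonneg_right h1 (mul_nonneg hS0 (wseq_pos n).le)
    _ = lam * S * (lam^n * wseq n) := by rw [h2]; ring
  have hSle : S ≤ lam * S := ciSup_le hcontr
  have hSzero : S = 0 := by nlinarith [hSle, hS0]
  have hAzero : ∀ n, A n = 0 := by
    intro n
    have h1 := hAle n
    rw [hSzero, zero_mul] at h1
    exact abs_eq_zero.mp (le_antisymm h1 (abs_nonneg _))
  intro n
  refine ⟨hAzero n, ?_⟩
  rw [hB n]
  have h2 : ∀ m : ℕ, A m / ((n:ℝ)+m+1/2) = 0 := fun m => by rw [hAzero m, zero_div]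
  rw [tsum_congr h2, tsum_zero, mul_zero]
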